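/- The octonionic Cauchy kernel E(x) = x̄/|x|⁸ is both left and right 𝕆-analytic on ℝ⁸ \ {0}, i.e., DE = 0 and ED = 0 there. -/

import Mathlib

noncomputable section
open MeasureTheory Metric
open scoped Quaternion

/-- The octonions, via the Cayley–Dickson construction on the quaternions,
carrying the Euclidean (`L²`) norm. -/
abbrev Octonion : Type := WithLp 2 (ℍ[ℝ] × ℍ[ℝ])

namespace Octonion

def mk (a b : ℍ[ℝ]) : Octonion := (WithLp.equiv 2 (ℍ[ℝ] × ℍ[ℝ])).symm (a, b)
def p1 (x : Octonion) : ℍ[ℝ] := (WithLp.equiv 2 (ℍ[ℝ] × ℍ[ℝ]) x).1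
def p2 (x : Octonion) : ℍ[ℝ] := (WithLp.equiv 2 (ℍ[ℝ] × ℍ[ℝ]) x).2

instance : One Octonion := ⟨mk 1 0⟩
/-- Cayley–Dickson multiplication: `(a,b)(c,d) = (ac - d̄b, da + bc̄)`. -/
instance : Mul Octonion :=
  ⟨fun x y => mk (p1 x * p1 y - star (p2 y) * p2 x) (p2 y * p1 x + p2 x * star (p1 y))⟩

/-- Octonionic conjugation. -/
def conj (x : Octonion) : Octonion := mk (star (p1 x)) (-(p2 x))

/-- The standard basis `e₀ = 1, e₁, …, e₇` of the octonions. -/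
def e : Fin 8 → Octonion
  | 0 => mk 1 0
  | 1 => mk ⟨0,1,0,0⟩ 0
  | 2 => mk ⟨0,0,1,0⟩ 0
  | 3 => mk ⟨0,0,0,1⟩ 0
  | 4 => mk 0 1
  | 5 => mk 0 ⟨0,1,0,0⟩
  | 6 => mk 0 ⟨0,0,1,0⟩
  | 7 => mk 0 ⟨0,0,0,1⟩

/-- The real coordinates of an octonion w.r.t. the basis `e`. -/
def coord (i : Fin 8) (x : Octonion) : ℝ :=
  match i with
  | 0 => (p1 x).re | 1 => (p1 x).imI | 2 => (p1 x).imJ | 3 => (p1 x).imK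
  | 4 => (p2 x).re | 5 => (p2 x).imI | 6 => (p2 x).imJ | 7 => (p2 x).imK

/-- Partial derivative in the direction `e i`. -/
def pd (i : Fin 8) (f : Octonion → Octonion) (x : Octonion) : Octonion :=
  fderiv ℝ f x (e i)

/-- The generalized Cauchy–Riemann operator `Df = ∑ eᵢ ∂f/∂xᵢ`. -/
def D (f : Octonion → Octonion) (x : Octonion) : Octonion := ∑ i, e i * pd i f x

/-- The right-acting Cauchy–Riemann operator `fD = ∑ (∂f/∂xᵢ) eᵢ`. -/
def Dright (f : Octonion → Octonion) (x : Octonion) : Octonion := ∑ i, pd i f x * e i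

/-- The conjugate Cauchy–Riemann operator `D̄f = ∑ ēᵢ ∂f/∂xᵢ`. -/
def Dbar (f : Octonion → Octonion) (x : Octonion) : Octonion := ∑ i, conj (e i) * pd i f x

/-- The Laplacian `Δf = ∑ ∂²f/∂xᵢ²`. -/
def lap (f : Octonion → Octonion) (x : Octonion) : Octonion :=
  ∑ i, fderiv ℝ (fun y => fderiv ℝ f y (e i)) x (e i)

instance : MeasurableSpace Octonion := borel _
instance : BorelSpace Octonion := ⟨rfl⟩
instance : MeasureSpace Octonion := ⟨Measure.addHaar⟩

/-- The surface measure on the unit sphere `S⁷`. -/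
def sphereMeasure : Measure (sphere (0 : Octonion) 1) := (volume : Measure Octonion).toSphere

/-- `ω₈`, the surface area of the unit sphere in `ℝ⁸`. -/
def ω : ℝ := (sphereMeasure Set.univ).toReal

theorem oext {x y : Octonion} (h1 : p1 x = p1 y) (h2 : p2 x = p2 y) : x = y :=
  (WithLp.equiv 2 _).injective (Prod.ext h1 h2)
@[simp] theorem p1_mk (a b : ℍ[ℝ]) : p1 (mk a b) = a := rfl
@[simp] theorem p2_mk (a b : ℍ[ℝ]) : p2 (mk a b) = b := rfl
@[simp] theorem p1_add (x y : Octonion) : p1 (x + y) = p1 x + p1 y := rfl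
@[simp] theorem p2_add (x y : Octonion) : p2 (x + y) = p2 x + p2 y := rfl
@[simp] theorem p1_smul (r : ℝ) (x : Octonion) : p1 (r • x) = r • p1 x := rfl
@[simp] theorem p2_smul (r : ℝ) (x : Octonion) : p2 (r • x) = r • p2 x := rfl
@[simp] theorem p1_one : p1 (1 : Octonion) = 1 := rfl
@[simp] theorem p2_one : p2 (1 : Octonion) = 0 := rfl
@[simp] theorem p1_mul (x y : Octonion) : p1 (x * y) = p1 x * p1 y - star (p2 y) * p2 x := rfl
@[simp] theorem p2_mul (x y : Octonion) : p2 (x * y) = p2 y * p1 x + p2 x * star (p1 y) := rfl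
@[simp] theorem p1_conj (x : Octonion) : p1 (conj x) = star (p1 x) := rfl
@[simp] theorem p2_conj (x : Octonion) : p2 (conj x) = -(p2 x) := rfl

theorem smul_mul (r : ℝ) (a b : Octonion) : (r • a) * b = r • (a * b) := by
  apply oext <;> simp only [p1_mul, p2_mul, p1_smul, p2_smul, star_smul] <;>
    simp [smul_sub, smul_add, mul_smul_comm, smul_mul_assoc]
theorem mul_smul' (r : ℝ) (a b : Octonion) : a * (r • b) = r • (a * b) := by
  apply oext <;> simp only [p1_mul, p2_mul, p1_smul, p2_smul, star_smul] <;>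
    simp [smul_sub, smul_add, mul_smul_comm, smul_mul_assoc]
theorem mul_add' (a b c : Octonion) : a * (b + c) = a * b + a * c := by
  apply oext <;> simp [mul_add, add_mul, star_add] <;> abel
theorem add_mul' (a b c : Octonion) : (a + b) * c = a * c + b * c := by
  apply oext <;> simp [mul_add, add_mul, star_add] <;> abel

def mulLeftLM (a : Octonion) : Octonion →ₗ[ℝ] Octonion where
  toFun b := a * b
  map_add' := mul_add' a
  map_smul' r b := mul_smul' r a b
def mulRightLM (a : Octonion) : Octonion →ₗ[ℝ] Octonion where
  toFun b := b * a
  map_add' x y := add_mul' x y a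
  map_smul' r b := smul_mul r b a

theorem norm_sq_oct (x : Octonion) : ‖x‖ ^ 2 = (Quaternion.normSq (p1 x) + Quaternion.normSq (p2 x) : ℝ) := by
  rw [WithLp.prod_norm_sq_eq_of_L2]
  simp [← Quaternion.normSq_eq_norm_mul_self, sq, p1, p2]
theorem real_smul_one (r : ℝ) : r • (1 : ℍ[ℝ]) = (r : ℍ[ℝ]) := by
  rw [show ((r:ℝ):ℍ[ℝ]) = algebraMap ℝ ℍ[ℝ] r from rfl, Algebra.algebraMap_eq_smul_one]
  -- , Algebra.algebraMap_eq_smul_one]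
theorem mul_conj_self (x : Octonion) : x * conj x = (‖x‖ ^ 2) • 1 := by
  apply oext
  · simp [norm_sq_oct, Quaternion.self_mul_star, Quaternion.star_mul_self, real_smul_one]
  · simp
theorem conj_mul_self (x : Octonion) : conj x * x = (‖x‖ ^ 2) • 1 := by
  apply oext
  · simp [norm_sq_oct, Quaternion.self_mul_star, Quaternion.star_mul_self, real_smul_one, add_comm]
  · simp

theorem e_mul_conj_e (i : Fin 8) : e i * conj (e i) = 1 := by
  fin_cases i <;>
    (apply oext <;> simp [e, Quaternion.ext_iff, Quaternion.re_mul, Quaternion.imI_mul,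
      Quaternion.imJ_mul, Quaternion.imK_mul] <;> simp [mk, p1, p2])
theorem conj_e_mul_e (i : Fin 8) : conj (e i) * e i = 1 := by
  fin_cases i <;>
    (apply oext <;> simp [e, Quaternion.ext_iff, Quaternion.re_mul, Quaternion.imI_mul,
      Quaternion.imJ_mul, Quaternion.imK_mul] <;> simp [mk, p1, p2])
theorem decompose (x : Octonion) : ∑ i, coord i x • e i = x := by
  apply oext <;>
    simp [Fin.sum_univ_eight, coord, e, Quaternion.ext_iff] <;> simp [mk, p1, p2]
theorem inner_e (x : Octonion) (i : Fin 8) : (inner ℝ x (e i) : ℝ) = coord i x := by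
  fin_cases i <;>
    simp [e, coord, mk, p1, p2, WithLp.prod_inner_apply, Quaternion.inner_def,
      Quaternion.re_mul, Quaternion.ext_iff] <;> erw [Quaternion.inner_def] <;> simp only [Quaternion.re_mul] <;> erw [Quaternion.re_star, Quaternion.imI_star, Quaternion.imJ_star, Quaternion.imK_star] <;> simp


instance : FiniteDimensional ℝ Octonion :=
  (WithLp.linearEquiv 2 ℝ (ℍ[ℝ] × ℍ[ℝ])).symm.finiteDimensional

theorem conj_add (x y : Octonion) : conj (x + y) = conj x + conj y := by
  apply oext <;> simp <;> abel
theorem conj_smul (r : ℝ) (x : Octonion) : conj (r • x) = r • conj x := by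
  apply oext <;> simp

def conjLM : Octonion →ₗ[ℝ] Octonion where
  toFun := conj
  map_add' := conj_add
  map_smul' := conj_smul

def conjCLM : Octonion →L[ℝ] Octonion := conjLM.toContinuousLinearMap

@[simp] theorem conjCLM_apply (x : Octonion) : conjCLM x = conj x := rfl

theorem hasFDerivAt_E (x : Octonion) (hx : x ≠ 0) :
    HasFDerivAt (fun y : Octonion => (‖y‖ ^ 8)⁻¹ • conj y)
      ((((inner ℝ x x : ℝ) ^ 4)⁻¹) • conjCLM +
        ((-(4 * (inner ℝ x x : ℝ) ^ 3) / ((inner ℝ x x : ℝ) ^ 4) ^ 2) •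
          ((fderivInnerCLM ℝ (x, x)).comp
            ((ContinuousLinearMap.id ℝ Octonion).prod
              (ContinuousLinearMap.id ℝ Octonion)))).smulRight (conj x)) x := by
  have hQ : (inner ℝ x x : ℝ) ≠ 0 := by
    rw [real_inner_self_eq_norm_sq]
    exact pow_ne_zero 2 (norm_ne_zero_iff.2 hx)
  have hq : HasFDerivAt (fun y : Octonion => (inner ℝ y y : ℝ))
      ((fderivInnerCLM ℝ (x, x)).comp
        ((ContinuousLinearMap.id ℝ Octonion).prod (ContinuousLinearMap.id ℝ Octonion))) x :=
    (hasFDerivAt_id x).inner ℝ (hasFDerivAt_id x)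
  have hφ : HasDerivAt (fun t : ℝ => (t ^ 4)⁻¹)
      (-(4 * (inner ℝ x x : ℝ) ^ 3) / ((inner ℝ x x : ℝ) ^ 4) ^ 2) (inner ℝ x x : ℝ) := by
    simpa using (hasDerivAt_pow 4 (inner ℝ x x : ℝ)).fun_inv (pow_ne_zero 4 hQ)
  have hs : HasFDerivAt (fun y : Octonion => ((inner ℝ y y : ℝ) ^ 4)⁻¹)
      ((-(4 * (inner ℝ x x : ℝ) ^ 3) / ((inner ℝ x x : ℝ) ^ 4) ^ 2) •
        ((fderivInnerCLM ℝ (x, x)).comp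
          ((ContinuousLinearMap.id ℝ Octonion).prod (ContinuousLinearMap.id ℝ Octonion)))) x :=
    hφ.comp_hasFDerivAt_of_eq x hq rfl
  have hE := hs.smul conjCLM.hasFDerivAt
  have hfun : (fun y : Octonion => (‖y‖ ^ 8)⁻¹ • conj y)
      = fun y : Octonion => ((inner ℝ y y : ℝ) ^ 4)⁻¹ • conj y := by
    funext y
    rw [real_inner_self_eq_norm_sq, ← pow_mul]
  rw [hfun]
  exact hE


theorem pd_E (x : Octonion) (hx : x ≠ 0) (i : Fin 8) :
    pd i (fun y => (‖y‖ ^ 8)⁻¹ • conj y) x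
      = (((inner ℝ x x : ℝ) ^ 4)⁻¹) • conj (e i)
        + ((-(4 * (inner ℝ x x : ℝ) ^ 3) / ((inner ℝ x x : ℝ) ^ 4) ^ 2)
            * (2 * coord i x)) • conj x := by
  rw [pd, (hasFDerivAt_E x hx).fderiv]
  simp only [ContinuousLinearMap.add_apply, ContinuousLinearMap.coe_smul',
    Pi.smul_apply, conjCLM_apply, ContinuousLinearMap.smulRight_apply,
    ContinuousLinearMap.smul_apply, ContinuousLinearMap.comp_apply,
    ContinuousLinearMap.prod_apply, ContinuousLinearMap.id_apply,
    fderivInnerCLM_apply, inner_e, real_inner_comm (e i) x, smul_eq_mul]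
  have h : (inner ℝ (e i) x : ℝ) = coord i x := by rw [real_inner_comm]; exact inner_e x i
  rw [h]
  congr 2
  ring


theorem sum_e_mul_conj (x : Octonion) :
    ∑ i, (coord i x • e i) * conj x = x * conj x := by
  have : ∑ i, (coord i x • e i) * conj x
      = mulRightLM (conj x) (∑ i, coord i x • e i) := by
    rw [map_sum]; rfl
  rw [this, decompose]; rfl

theorem sum_conj_mul_e (x : Octonion) :
    ∑ i, conj x * (coord i x • e i) = conj x * x := by
  have : ∑ i, conj x * (coord i x • e i)
      = mulLeftLM (conj x) (∑ i, coord i x • e i) := by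
    rw [map_sum]; rfl
  rw [this, decompose]; rfl

end Octonion

/-- The octonionic Cauchy kernel `E(x) = x̄/|x|⁸` is left and right
octonionic analytic away from the origin. -/
theorem octonion_cauchy_kernel_analytic (x : Octonion) (hx : x ≠ 0) :
    Octonion.D (fun y => (‖y‖ ^ 8)⁻¹ • Octonion.conj y) x = 0 ∧
    Octonion.Dright (fun y => (‖y‖ ^ 8)⁻¹ • Octonion.conj y) x = 0 := by
  set Q : ℝ := (inner ℝ x x : ℝ) with hQdef
  have hQ : Q ≠ 0 := by
    rw [hQdef, real_inner_self_eq_norm_sq]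
    exact pow_ne_zero 2 (norm_ne_zero_iff.2 hx)
  have hnorm : ‖x‖ ^ 2 = Q := (real_inner_self_eq_norm_sq x).symm
  set k : ℝ := (Q ^ 4)⁻¹ with hkdef
  set c : ℝ := -(4 * Q ^ 3) / (Q ^ 4) ^ 2 with hcdef
  have hpd : ∀ i, Octonion.pd i (fun y => (‖y‖ ^ 8)⁻¹ • Octonion.conj y) x
      = k • Octonion.conj (Octonion.e i) + (c * (2 * Octonion.coord i x)) • Octonion.conj x :=
    fun i => Octonion.pd_E x hx i
  have hsc : 8 * k + 2 * c * Q = 0 := by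
    rw [hkdef, hcdef]; field_simp; ring
  have h1 : ∑ _i : Fin 8, k • (1 : Octonion) = (8 * k) • 1 := by
    rw [Finset.sum_const, Finset.card_univ, Fintype.card_fin,
      ← Nat.cast_smul_eq_nsmul ℝ, smul_smul]
    norm_num
  constructor
  · rw [Octonion.D]
    have hterm : ∀ i, Octonion.e i * Octonion.pd i (fun y => (‖y‖ ^ 8)⁻¹ • Octonion.conj y) x
        = k • (1 : Octonion)
          + (2 * c) • ((Octonion.coord i x • Octonion.e i) * Octonion.conj x) := by
      intro i
      rw [hpd i, Octonion.mul_add', Octonion.mul_smul', Octonion.mul_smul',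
        Octonion.e_mul_conj_e, Octonion.smul_mul, smul_smul]
      congr 2
      ring
    simp only [hterm]
    rw [Finset.sum_add_distrib, h1, ← Finset.smul_sum, Octonion.sum_e_mul_conj,
      Octonion.mul_conj_self, hnorm, smul_smul, ← add_smul,
      show 8 * k + 2 * c * Q = 0 from hsc, zero_smul]
  · rw [Octonion.Dright]
    have hterm : ∀ i, Octonion.pd i (fun y => (‖y‖ ^ 8)⁻¹ • Octonion.conj y) x * Octonion.e i
        = k • (1 : Octonion)
          + (2 * c) • (Octonion.conj x * (Octonion.coord i x • Octonion.e i)) := by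
      intro i
      rw [hpd i, Octonion.add_mul', Octonion.smul_mul, Octonion.smul_mul,
        Octonion.conj_e_mul_e, Octonion.mul_smul', smul_smul]
      congr 2
      ring
    simp only [hterm]
    rw [Finset.sum_add_distrib, h1, ← Finset.smul_sum, Octonion.sum_conj_mul_e,
      Octonion.conj_mul_self, hnorm, smul_smul, ← add_smul,
      show 8 * k + 2 * c * Q = 0 from hsc, zero_smul]
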